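/- Let a > 0, a ≠ 1, and let X : ℝ² → ℝ³ be defined by X(u,v) = ( cosh(a u)·sin(a v)/a , [−sin v·cos(a v)·sinh u·sinh(a u) + a·sin(a v)·cos v·sinh u·sinh(a u) + a·sin v·cos(a v)·cosh u·cosh(a u) − cos v·sin(a v)·cosh u·cosh(a u)]/(a²−1) + sinh u·cos v , [a·cos v·sin(a v)·cosh u·sinh(a u) − sin v·cos(a v)·cosh u·sinh(a u) + a·sin v·cos(a v)·sinh u·cosh(a u) − cos v·sin(a v)·sinh u·cosh(a u)]/(a²−1) + cos v·cosh u ). Then for every u ∈ ℝ: (i) X(u,0) = (0, sinh u, cosh u); and (ii) the vector V(u) = (sinh(a u), cosh(a u)·sinh u, cosh(a u)·cosh u) satisfies ⟨V(u),V(u)⟩_L = −1, ⟨V(u), ∂X/∂u (u,0)⟩_L = 0 and ⟨V(u), ∂X/∂v (u,0)⟩_L = 0. -/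

import Mathlib

open Real

/-- Lorentzian inner product on ℝ³: ⟨p,q⟩ = p₁q₁ + p₂q₂ − p₃q₃. -/
noncomputable def lorentz (p q : ℝ × ℝ × ℝ) : ℝ :=
  p.1 * q.1 + p.2.1 * q.2.1 - p.2.2 * q.2.2

/-- First coordinate of the bending helicoid with spacelike axis. -/
noncomputable def X1 (a u v : ℝ) : ℝ :=
  cosh (a*u) * sin (a*v) / a

/-- Second coordinate of the bending helicoid with spacelike axis. -/
noncomputable def X2 (a u v : ℝ) : ℝ :=
  (- sin v * cos (a*v) * sinh u * sinh (a*u)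
   + a * sin (a*v) * cos v * sinh u * sinh (a*u)
   + a * sin v * cos (a*v) * cosh u * cosh (a*u)
   - cos v * sin (a*v) * cosh u * cosh (a*u)) / (a^2 - 1)
  + sinh u * cos v

/-- Third coordinate of the bending helicoid with spacelike axis. -/
noncomputable def X3 (a u v : ℝ) : ℝ :=
  (a * cos v * sin (a*v) * cosh u * sinh (a*u)
   - sin v * cos (a*v) * cosh u * sinh (a*u)
   + a * sin v * cos (a*v) * sinh u * cosh (a*u)
   - cos v * sin (a*v) * sinh u * cosh (a*u)) / (a^2 - 1)
  + cos v * cosh u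

/-- Partial derivative of X with respect to u. -/
noncomputable def Xu (a u v : ℝ) : ℝ × ℝ × ℝ :=
  (deriv (fun s => X1 a s v) u, deriv (fun s => X2 a s v) u, deriv (fun s => X3 a s v) u)

/-- Partial derivative of X with respect to v. -/
noncomputable def Xv (a u v : ℝ) : ℝ × ℝ × ℝ :=
  (deriv (fun t => X1 a u t) v, deriv (fun t => X2 a u t) v, deriv (fun t => X3 a u t) v)

/-- The Björling data normal field. -/
noncomputable def V (a u : ℝ) : ℝ × ℝ × ℝ :=
  (sinh (a*u), cosh (a*u) * sinh u, cosh (a*u) * cosh u)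

/-- The bending helicoid with spacelike axis contains the circle (0, sinh u, cosh u) and
V(u) is a unit timelike vector field normal to the surface along it. -/
theorem bending_helicoid_spacelike_bjorling (a : ℝ) (ha : 0 < a) (ha1 : a ≠ 1) (u : ℝ) :
    (X1 a u 0, X2 a u 0, X3 a u 0) = (0, sinh u, cosh u) ∧
    lorentz (V a u) (V a u) = -1 ∧
    lorentz (V a u) (Xu a u 0) = 0 ∧
    lorentz (V a u) (Xv a u 0) = 0 := by
  have ha0 : a ≠ 0 := ne_of_gt ha
  have ha2 : a^2 - 1 ≠ 0 := by
    intro h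
    have h' : (a - 1) * (a + 1) = 0 := by linarith [h, sq_nonneg a, sq a ▸ h]
    rcases mul_eq_zero.1 h' with h'' | h''
    · exact ha1 (by linarith)
    · linarith
  have hcu := Real.cosh_sq u
  have hcau := Real.cosh_sq (a*u)
  -- derivatives in v at 0
  have hsa : HasDerivAt (fun t : ℝ => sin (a*t)) (a * cos (a*0)) 0 := by
    convert ((hasDerivAt_id' 0).const_mul a).sin using 1; ring
  have hca : HasDerivAt (fun t : ℝ => cos (a*t)) (-(a * sin (a*0))) 0 := by
    convert ((hasDerivAt_id' 0).const_mul a).cos using 1; ring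
  have hfg : HasDerivAt (fun t : ℝ => sin t * cos (a*t)) 1 0 := by
    exact ((Real.hasDerivAt_sin 0).mul hca).congr_deriv (by simp)
  have hg : HasDerivAt (fun t : ℝ => sin (a*t) * cos t) a 0 := by
    exact (hsa.mul (Real.hasDerivAt_cos 0)).congr_deriv (by simp)
  have hh : HasDerivAt (fun t : ℝ => cos t * sin (a*t)) a 0 := by
    exact ((Real.hasDerivAt_cos 0).mul hsa).congr_deriv (by simp)
  have hcos0 : HasDerivAt Real.cos 0 0 := by simpa using Real.hasDerivAt_cos 0
  have h1 : HasDerivAt (fun t => X1 a u t) (cosh (a*u)) 0 := by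
    have : HasDerivAt (fun t : ℝ => cosh (a*u) * sin (a*t) / a)
        (cosh (a*u) * (a * cos (a*0)) / a) 0 := (hsa.const_mul (cosh (a*u))).div_const a
    have e : (fun t => X1 a u t) = fun t : ℝ => cosh (a*u) * sin (a*t) / a := by
      funext t; simp [X1]
    rw [e]
    convert this using 1
    field_simp
    simp
  have h2 : HasDerivAt (fun t => X2 a u t) (sinh u * sinh (a*u)) 0 := by
    have e : (fun t => X2 a u t) = fun t : ℝ =>
        ((sin t * cos (a*t)) * (a * (cosh u * cosh (a*u)) - sinh u * sinh (a*u))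
          + (sin (a*t) * cos t) * (a * (sinh u * sinh (a*u)) - cosh u * cosh (a*u))) / (a^2-1)
          + cos t * sinh u := by
      funext t; simp only [X2]; ring
    rw [e]
    have := (((hfg.mul_const (a * (cosh u * cosh (a*u)) - sinh u * sinh (a*u))).add
      (hg.mul_const (a * (sinh u * sinh (a*u)) - cosh u * cosh (a*u)))).div_const (a^2-1)).add
      (hcos0.mul_const (sinh u))
    refine this.congr_deriv ?_
    field_simp
    ring
  have h3 : HasDerivAt (fun t => X3 a u t) (cosh u * sinh (a*u)) 0 := by
    have e : (fun t => X3 a u t) = fun t : ℝ =>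
        ((cos t * sin (a*t)) * (a * (cosh u * sinh (a*u)) - sinh u * cosh (a*u))
          + (sin t * cos (a*t)) * (a * (sinh u * cosh (a*u)) - cosh u * sinh (a*u))) / (a^2-1)
          + cos t * cosh u := by
      funext t; simp only [X3]; ring
    rw [e]
    have := (((hh.mul_const (a * (cosh u * sinh (a*u)) - sinh u * cosh (a*u))).add
      (hfg.mul_const (a * (sinh u * cosh (a*u)) - cosh u * sinh (a*u)))).div_const (a^2-1)).add
      (hcos0.mul_const (cosh u))
    refine this.congr_deriv ?_
    field_simp
    ring
  have hXv : Xv a u 0 = (cosh (a*u), sinh u * sinh (a*u), cosh u * sinh (a*u)) := by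
    simp [Xv, h1.deriv, h2.deriv, h3.deriv]
  -- derivatives in u at v = 0
  have e1 : (fun s => X1 a s 0) = fun _ : ℝ => (0:ℝ) := by funext s; simp [X1]
  have e2 : (fun s => X2 a s 0) = Real.sinh := by funext s; simp [X2]
  have e3 : (fun s => X3 a s 0) = Real.cosh := by funext s; simp [X3]
  have hXu : Xu a u 0 = (0, cosh u, sinh u) := by
    simp [Xu, e1, e2, e3, Real.deriv_sinh, Real.deriv_cosh]
  refine ⟨by simp [X1, X2, X3], ?_, ?_, ?_⟩
  · simp only [lorentz, V]
    linear_combination (-(Real.cosh (a*u))^2) * hcu - hcau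
  · rw [hXu]; simp only [lorentz, V]; ring
  · rw [hXv]; simp only [lorentz, V]
    linear_combination (-(Real.sinh (a*u) * Real.cosh (a*u))) * hcu
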